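/- Let ω be an unbounded admissible weight on ℝ^d. Then there exists a sequence of admissible weights (ω_n)_{n∈ℕ} on ℝ^d such that (i) ω_{n+1}(x) ≤ ω_n(x) ≤ ω(x) for all n∈ℕ and all x, (ii) for each n there is a constant c_n > 0 with ω(x) ≤ c_n ω_n(x) for all x, and (iii) ω_n → 1 as n→∞ uniformly on compact subsets of ℝ^d. -/

import Mathlib

open scoped ENNReal NNReal
open Filter

/-- An admissible weight on `ℝ^d`: `ω(x) = e^{ρ(|x|)}` for some norm `|·|` on `ℝ^d` and a
continuous concave `ρ : [0,∞) → [0,∞)` with `ρ(0) = 0`, satisfying the GRS-condition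
`lim_n ω(nx)^{1/n} = 1` for every `x`. -/
def IsAdmissibleWeight {d : ℕ} (ω : (Fin d → ℝ) → ℝ) : Prop :=
  (∃ (N : (Fin d → ℝ) → ℝ) (ρ : ℝ → ℝ),
    (∀ x, 0 ≤ N x) ∧ (∀ x, N x = 0 ↔ x = 0) ∧
    (∀ x y, N (x + y) ≤ N x + N y) ∧ (∀ (c : ℝ) (x), N (c • x) = |c| * N x) ∧
    ContinuousOn ρ (Set.Ici 0) ∧ ConcaveOn ℝ (Set.Ici 0) ρ ∧
    ρ 0 = 0 ∧ (∀ t : ℝ, 0 ≤ t → 0 ≤ ρ t) ∧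
    (∀ x, ω x = Real.exp (ρ (N x)))) ∧
  (∀ x, Filter.Tendsto (fun n : ℕ => ω ((n : ℝ) • x) ^ ((n : ℝ)⁻¹)) Filter.atTop (nhds 1))

/-- The weak growth condition: `ω(x) ≥ C (1 + |x|)^δ` for some `C > 0`, `0 < δ ≤ 1`. -/
def WeakGrowth {d : ℕ} (ω : (Fin d → ℝ) → ℝ) : Prop :=
  ∃ C : ℝ, 0 < C ∧ ∃ δ : ℝ, 0 < δ ∧ δ ≤ 1 ∧ ∀ x, C * (1 + ‖x‖) ^ δ ≤ ω x

/-- The canonical embedding `ℤ^d → ℝ^d`. -/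
def zr {d : ℕ} (k : Fin d → ℤ) : Fin d → ℝ := fun i => (k i : ℝ)

/-- The weighted Schur-type `p`-norm of an infinite matrix `A = (a_{kl})_{k,l ∈ ℤ^d}` with
respect to a weight `ν` on `ℤ^d` (valued in `ℝ≥0∞`):
`max{ sup_k Σ_l |a_{kl}|^p ν(k−l)^p , sup_l Σ_k |a_{kl}|^p ν(k−l)^p }`. -/
noncomputable def mnorm {d : ℕ} (p : ℝ) (ν : (Fin d → ℤ) → ℝ)
    (A : (Fin d → ℤ) → (Fin d → ℤ) → ℂ) : ℝ≥0∞ :=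
  max (⨆ k : Fin d → ℤ, ∑' l : Fin d → ℤ,
        (‖A k l‖₊ : ℝ≥0∞) ^ p * ENNReal.ofReal (ν (k - l)) ^ p)
      (⨆ l : Fin d → ℤ, ∑' k : Fin d → ℤ,
        (‖A k l‖₊ : ℝ≥0∞) ^ p * ENNReal.ofReal (ν (k - l)) ^ p)

/-- Product of infinite matrices: `(A ⋆ B)_{kl} = Σ_j a_{kj} b_{jl}`. -/
noncomputable def matmul {d : ℕ} (A B : (Fin d → ℤ) → (Fin d → ℤ) → ℂ) :
    (Fin d → ℤ) → (Fin d → ℤ) → ℂ :=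
  fun k l => ∑' j : Fin d → ℤ, A k j * B j l

/-- `matpow A n` is the `(n+1)`-fold matrix power `A^{n+1}`. -/
noncomputable def matpow {d : ℕ} (A : (Fin d → ℤ) → (Fin d → ℤ) → ℂ) :
    ℕ → (Fin d → ℤ) → (Fin d → ℤ) → ℂ
  | 0 => A
  | n + 1 => matmul A (matpow A n)

/-- Let `ω` be an unbounded admissible weight on `ℝ^d`.  Then there is a sequence of
admissible weights `ω_n` with (i) `ω_{n+1} ≤ ω_n ≤ ω`, (ii) `ω ≤ c_n ω_n` for some
constants `c_n > 0`, and (iii) `ω_n → 1` uniformly on compact subsets of `ℝ^d`. -/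
theorem exists_auxiliary_weights
    {d : ℕ} (ω : (Fin d → ℝ) → ℝ) (hadm : IsAdmissibleWeight ω)
    (hunb : ∀ M : ℝ, ∃ x, M < ω x) :
    ∃ ωs : ℕ → (Fin d → ℝ) → ℝ,
      (∀ n, IsAdmissibleWeight (ωs n)) ∧
      (∀ n x, ωs (n + 1) x ≤ ωs n x ∧ ωs n x ≤ ω x) ∧
      (∀ n, ∃ c : ℝ, 0 < c ∧ ∀ x, ω x ≤ c * ωs n x) ∧
      (∀ s : Set (Fin d → ℝ), IsCompact s →
        TendstoUniformlyOn (fun n x => ωs n x) (fun _ => 1) atTop s) := by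
  
  classical
  obtain ⟨⟨N, ρ, hN0, hNeq, hNadd, hNsmul, hρc, hρconc, hρz, hρnn, hω⟩, hGRS⟩ := hadm
  -- a point with positive norm
  obtain ⟨x₀, hx₀⟩ := hunb 1
  have ha : 0 < N x₀ := by
    rcases lt_or_eq_of_le (hN0 x₀) with h | h
    · exact h
    · exfalso
      have hx0 : x₀ = 0 := (hNeq x₀).1 h.symm
      have hω1 : ω x₀ = 1 := by rw [hω, ← h, hρz, Real.exp_zero]
      rw [hω1] at hx₀
      exact lt_irrefl 1 hx₀
  set a : ℝ := N x₀ with ha_def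
  -- slope inequality from concavity
  have slope : ∀ s t : ℝ, 0 < s → s ≤ t → s * ρ t ≤ t * ρ s := by
    intro s t hs hst
    have ht : 0 < t := hs.trans_le hst
    have hb0 : (0:ℝ) ≤ 1 - s / t := by
      rw [sub_nonneg]; exact div_le_one_of_le₀ hst ht.le
    have h := hρconc.2 (Set.mem_Ici.2 ht.le) (Set.mem_Ici.2 (le_refl (0:ℝ)))
      (by positivity : (0:ℝ) ≤ s / t) hb0 (by ring)
    simp only [smul_eq_mul, mul_zero, add_zero, hρz] at h
    rw [div_mul_cancel₀ _ ht.ne'] at h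
    have h2 := mul_le_mul_of_nonneg_left h ht.le
    calc s * ρ t = t * (s / t * ρ t) := by field_simp
      _ ≤ t * ρ s := h2
  -- GRS gives ρ(n a)/n → 0
  have hgrs0 : Tendsto (fun n : ℕ => ρ ((n : ℝ) * a) * (n : ℝ)⁻¹) atTop (nhds 0) := by
    have h1 := hGRS x₀
    have heq : ∀ n : ℕ, ω ((n : ℝ) • x₀) ^ ((n : ℝ)⁻¹)
        = Real.exp (ρ ((n : ℝ) * a) * (n : ℝ)⁻¹) := by
      intro n
      rw [hω, hNsmul, abs_of_nonneg (Nat.cast_nonneg n), Real.exp_mul]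
    rw [show (fun n : ℕ => ω ((n : ℝ) • x₀) ^ ((n : ℝ)⁻¹))
        = fun n : ℕ => Real.exp (ρ ((n : ℝ) * a) * (n : ℝ)⁻¹) from funext heq] at h1
    have hlog : Tendsto Real.log (nhds 1) (nhds 0) := by
      have := (Real.continuousAt_log (one_ne_zero)).tendsto
      rwa [Real.log_one] at this
    have := hlog.comp h1
    simpa only [Function.comp_def, Real.log_exp] using this
  -- sublinearity: for every ε > 0 there is T > 0 beyond which ρ t ≤ ε t
  have sublin : ∀ ε : ℝ, 0 < ε → ∃ T : ℝ, 0 < T ∧ ∀ t : ℝ, T ≤ t → ρ t ≤ ε * t := by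
    intro ε hε
    have hev : ∀ᶠ n : ℕ in atTop, ρ ((n : ℝ) * a) * (n : ℝ)⁻¹ < ε * a := by
      have := hgrs0.eventually (eventually_lt_nhds (by positivity : (0:ℝ) < ε * a))
      simpa using this
    obtain ⟨n, hn⟩ := (hev.and (eventually_ge_atTop 1)).exists
    obtain ⟨hn1, hn2⟩ := hn
    have hnpos : (0 : ℝ) < (n : ℝ) := by exact_mod_cast hn2
    refine ⟨(n : ℝ) * a, by positivity, fun t ht => ?_⟩
    have hT : (0 : ℝ) < (n : ℝ) * a := by positivity
    have hρT : ρ ((n : ℝ) * a) < ε * ((n : ℝ) * a) := by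
      have := mul_lt_mul_of_pos_right hn1 hnpos
      rw [mul_assoc] at this
      rw [inv_mul_cancel₀ hnpos.ne', mul_one] at this
      calc ρ ((n : ℝ) * a) = ρ ((n : ℝ) * a) * (n:ℝ)⁻¹ * (n:ℝ) := by
            field_simp
        _ < ε * a * (n:ℝ) := by
            exact mul_lt_mul_of_pos_right hn1 hnpos
        _ = ε * ((n : ℝ) * a) := by ring
    have hsl := slope ((n : ℝ) * a) t hT ht
    have htpos : 0 < t := hT.trans_le ht
    have : ((n:ℝ) * a) * ρ t ≤ t * (ε * ((n : ℝ) * a)) :=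
      hsl.trans (by
        have := mul_le_mul_of_nonneg_left hρT.le htpos.le
        linarith)
    have h2 : ((n:ℝ) * a) * ρ t ≤ ((n:ℝ) * a) * (ε * t) := by
      calc ((n:ℝ) * a) * ρ t ≤ t * (ε * ((n : ℝ) * a)) := this
        _ = ((n:ℝ) * a) * (ε * t) := by ring
    exact le_of_mul_le_mul_left h2 hT
  -- the auxiliary weights
  set ε : ℕ → ℝ := fun n => ((n : ℝ) + 1)⁻¹ with hε_def
  have hεpos : ∀ n, 0 < ε n := fun n => by positivity
  set ρs : ℕ → ℝ → ℝ := fun n t => min (ρ t) (ε n * t) with hρs_def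
  refine ⟨fun n x => Real.exp (ρs n (N x)), ?_, ?_, ?_, ?_⟩
  · -- admissibility
    intro n
    constructor
    · refine ⟨N, ρs n, hN0, hNeq, hNadd, hNsmul, ?_, ?_, ?_, ?_, fun x => rfl⟩
      · intro x hx
        exact (hρc x hx).min ((continuous_const.mul continuous_id).continuousWithinAt)
      · have h1 : ConcaveOn ℝ (Set.Ici (0:ℝ)) (fun t : ℝ => ε n * t) := by
          have := (concaveOn_id (convex_Ici (0:ℝ))).smul (c := ε n) (hεpos n).le
          simpa [smul_eq_mul] using this
        refine ⟨hρconc.1, fun x hx y hy p q hp hq hpq => ?_⟩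
        have hρx := hρconc.2 hx hy hp hq hpq
        have hlx := h1.2 hx hy hp hq hpq
        have h2 : p • min (ρ x) (ε n * x) + q • min (ρ y) (ε n * y)
            ≤ p • ρ x + q • ρ y := by
          gcongr <;> [exact min_le_left _ _; exact min_le_left _ _]
        have h3 : p • min (ρ x) (ε n * x) + q • min (ρ y) (ε n * y)
            ≤ p • (ε n * x) + q • (ε n * y) := by
          gcongr <;> [exact min_le_right _ _; exact min_le_right _ _]
        exact le_min (h2.trans hρx) (h3.trans hlx)
      · simp [hρs_def, hρz]
      · intro t ht
        exact le_min (hρnn t ht) (mul_nonneg (hεpos n).le ht)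
    · -- GRS via squeeze
      intro x
      have hub : ∀ m : ℕ, Real.exp (ρs n (N ((m : ℝ) • x))) ^ ((m : ℝ)⁻¹)
          ≤ ω ((m : ℝ) • x) ^ ((m : ℝ)⁻¹) := by
        intro m
        rw [hω, ← Real.exp_mul, ← Real.exp_mul]
        apply Real.exp_le_exp.2
        apply mul_le_mul_of_nonneg_right (min_le_left _ _) (by positivity)
      have hlb : ∀ m : ℕ, (1 : ℝ) ≤ Real.exp (ρs n (N ((m : ℝ) • x))) ^ ((m : ℝ)⁻¹) := by
        intro m
        rw [← Real.exp_mul, ← Real.exp_zero]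
        apply Real.exp_le_exp.2
        have h1 : 0 ≤ ρs n (N ((m : ℝ) • x)) :=
          le_min (hρnn _ (hN0 _)) (mul_nonneg (hεpos n).le (hN0 _))
        exact mul_nonneg h1 (by positivity)
      exact tendsto_of_tendsto_of_tendsto_of_le_of_le tendsto_const_nhds (hGRS x) hlb hub
  · -- monotonicity
    intro n x
    constructor
    · apply Real.exp_le_exp.2
      apply min_le_min le_rfl
      apply mul_le_mul_of_nonneg_right _ (hN0 x)
      apply inv_anti₀ (by positivity)
      push_cast; linarith
    · rw [hω]
      exact Real.exp_le_exp.2 (min_le_left _ _)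
  · -- ω ≤ c ωs n
    intro n
    obtain ⟨T, hT, hTle⟩ := sublin (ε n) (hεpos n)
    obtain ⟨z, hzmem, hz⟩ := isCompact_Icc.exists_isMaxOn (s := Set.Icc (0:ℝ) T)
      ⟨0, by simp [hT.le]⟩ (hρc.mono (fun t ht => ht.1))
    set M : ℝ := max (ρ z) 0 with hM_def
    refine ⟨Real.exp M, Real.exp_pos _, fun x => ?_⟩
    rw [hω, ← Real.exp_add]
    apply Real.exp_le_exp.2
    simp only [hρs_def]
    set t : ℝ := N x with ht_def
    have htnn : 0 ≤ t := hN0 x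
    rcases le_or_gt (ρ t) (ε n * t) with h | h
    · rw [min_eq_left h]
      have : (0:ℝ) ≤ M := le_max_right _ _
      linarith
    · rw [min_eq_right h.le]
      rcases le_or_gt t T with hc | hc
      · have hzb : ρ t ≤ ρ z := hz ⟨htnn, hc⟩
        have : (0:ℝ) ≤ ε n * t := by positivity
        have : ρ z ≤ M := le_max_left _ _
        linarith [hz ⟨htnn, hc⟩]
      · exact absurd (hTle t hc.le) (not_le.2 h)
  · -- uniform convergence on compacts
    intro s hs
    -- N is bounded above on s
    have hNbd : ∃ R : ℝ, 0 ≤ R ∧ ∀ x ∈ s, N x ≤ R := by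
      obtain ⟨C, hC⟩ := isBounded_iff_forall_norm_le.1 hs.isBounded
      have hNsum : ∀ (u : Finset (Fin d)) (f : Fin d → (Fin d → ℝ)),
          N (∑ i ∈ u, f i) ≤ ∑ i ∈ u, N (f i) := by
        intro u
        induction u using Finset.cons_induction with
        | empty => intro f; simp [(hNeq 0).2 rfl]
        | cons i u hi ih =>
          intro f
          rw [Finset.sum_cons, Finset.sum_cons]
          exact (hNadd _ _).trans (by linarith [ih f])
      set K : ℝ := ∑ i : Fin d, N (fun j => if i = j then (1:ℝ) else 0) with hK
      have hKnn : 0 ≤ K := Finset.sum_nonneg (fun i _ => hN0 _)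
      refine ⟨K * max C 0, by positivity, fun x hx => ?_⟩
      have hxe : x = ∑ i : Fin d, x i • (fun j => if i = j then (1:ℝ) else 0) :=
        pi_eq_sum_univ x
      have hxd : N x ≤ ∑ i : Fin d, |x i| * N (fun j => if i = j then (1:ℝ) else 0) := by
        calc N x = N (∑ i : Fin d, x i • (fun j => if i = j then (1:ℝ) else 0)) := by
              rw [← hxe]
          _ ≤ ∑ i : Fin d, N (x i • (fun j => if i = j then (1:ℝ) else 0)) := hNsum _ _
          _ = ∑ i : Fin d, |x i| * N (fun j => if i = j then (1:ℝ) else 0) :=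
              Finset.sum_congr rfl (fun i _ => hNsmul (x i) _)
      have hxb : ∀ i : Fin d, |x i| ≤ max C 0 := by
        intro i
        have := norm_le_pi_norm x i
        rw [Real.norm_eq_abs] at this
        exact this.trans ((hC x hx).trans (le_max_left _ _))
      calc N x ≤ ∑ i : Fin d, |x i| * N (fun j => if i = j then (1:ℝ) else 0) := hxd
        _ ≤ ∑ i : Fin d, max C 0 * N (fun j => if i = j then (1:ℝ) else 0) := by
            apply Finset.sum_le_sum
            intro i _
            exact mul_le_mul_of_nonneg_right (hxb i) (hN0 _)
        _ = K * max C 0 := by rw [← Finset.mul_sum, mul_comm]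
    obtain ⟨R, hR, hRle⟩ := hNbd
    rw [Metric.tendstoUniformlyOn_iff]
    intro δ hδ
    have hlim : Tendsto (fun n : ℕ => Real.exp (ε n * R)) atTop (nhds 1) := by
      have h1 : Tendsto (fun n : ℕ => ε n * R) atTop (nhds 0) := by
        have h2 : Tendsto (fun n : ℕ => ε n) atTop (nhds 0) := by
          exact tendsto_one_div_add_atTop_nhds_zero_nat.congr (fun n => one_div _)
        simpa using h2.mul_const R
      have := (Real.continuous_exp.tendsto 0).comp h1
      simpa [Function.comp_def] using this
    have hev : ∀ᶠ n : ℕ in atTop, Real.exp (ε n * R) < 1 + δ := by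
      exact hlim.eventually (eventually_lt_nhds (by linarith))
    filter_upwards [hev] with n hn x hx
    have h1 : (1:ℝ) ≤ Real.exp (ρs n (N x)) := by
      rw [← Real.exp_zero]
      exact Real.exp_le_exp.2 (le_min (hρnn _ (hN0 x)) (mul_nonneg (hεpos n).le (hN0 x)))
    have h2 : Real.exp (ρs n (N x)) ≤ Real.exp (ε n * R) := by
      apply Real.exp_le_exp.2
      exact (min_le_right _ _).trans
        (mul_le_mul_of_nonneg_left (hRle x hx) (hεpos n).le)
    rw [Real.dist_eq, abs_of_nonpos (by linarith)]
    linarith
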